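/- Let ν be a σ-finite measure on (Z, B(Z)), and let μ̃ = k·μ and μ̃′ = k′·μ′ with μ, μ′ probability measures absolutely continuous with respect to ν and k, k′ ∈ (0, ∞). Then the Hellinger distance between the normalized probability measures satisfies d_H(μ, μ′) ≤ (2/sqrt(k)) · d̃_H(μ̃, μ̃′), where d̃_H is the scaled Hellinger distance d̃_H(μ̃,μ̃′) = sqrt((1/2)∫(sqrt(dμ̃/dν) − sqrt(dμ̃′/dν))² dν). -/

import Mathlib

open MeasureTheory

/-- For scaled probability measures `μ̃ = k·μ` and `μ̃' = k'·μ'` (densities `k·π`,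
`k'·π'` w.r.t. a σ-finite `ν`), the Hellinger distance between the normalized
probability measures satisfies `d_H(μ, μ') ≤ (2/√k) · d̃_H(μ̃, μ̃')`. -/
theorem stmt5 {Z : Type*} [MeasurableSpace Z] (ν : Measure Z) [SigmaFinite ν]
    (π π' : Z → ℝ) (k k' : ℝ)
    (hπm : Measurable π) (hπ'm : Measurable π')
    (hπ0 : ∀ x, 0 ≤ π x) (hπ'0 : ∀ x, 0 ≤ π' x)
    (hπ1 : ∫ x, π x ∂ν = 1) (hπ'1 : ∫ x, π' x ∂ν = 1)
    (hk : 0 < k) (hk' : 0 < k') :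
    Real.sqrt ((1 / 2) * ∫ x, (Real.sqrt (π x) - Real.sqrt (π' x)) ^ 2 ∂ν) ≤
      (2 / Real.sqrt k) *
        Real.sqrt ((1 / 2) * ∫ x, (Real.sqrt (k * π x) - Real.sqrt (k' * π' x)) ^ 2 ∂ν) := by
  set a := Real.sqrt k with ha
  set b := Real.sqrt k' with hb
  have ha0 : 0 < a := Real.sqrt_pos.mpr hk
  have hb0 : 0 < b := Real.sqrt_pos.mpr hk'
  set f := fun x => Real.sqrt (π x) with hf
  set g := fun x => Real.sqrt (π' x) with hg
  have hfm : Measurable f := hπm.sqrt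
  have hgm : Measurable g := hπ'm.sqrt
  have hfsq : ∀ x, f x ^ 2 = π x := fun x => Real.sq_sqrt (hπ0 x)
  have hgsq : ∀ x, g x ^ 2 = π' x := fun x => Real.sq_sqrt (hπ'0 x)
  -- integrability of π and π'
  have hπint : Integrable π ν := by
    by_contra h
    rw [integral_undef h] at hπ1; norm_num at hπ1
  have hπ'int : Integrable π' ν := by
    by_contra h
    rw [integral_undef h] at hπ'1; norm_num at hπ'1
  have hfsqint : Integrable (fun x => f x ^ 2) ν := by
    simpa only [hfsq] using hπint
  have hgsqint : Integrable (fun x => g x ^ 2) ν := by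
    simpa only [hgsq] using hπ'int
  -- integrability of f*g
  have hfgint : Integrable (fun x => f x * g x) ν := by
    refine Integrable.mono' ((hπint.add hπ'int).div_const 2)
      (hfm.mul hgm).aestronglyMeasurable (Filter.Eventually.of_forall fun x => ?_)
    have h1 : 0 ≤ f x := Real.sqrt_nonneg _
    have h2 : 0 ≤ g x := Real.sqrt_nonneg _
    have : f x * g x ≤ (π x + π' x) / 2 := by
      have := sq_nonneg (f x - g x)
      nlinarith [hfsq x, hgsq x]
    simpa [Real.norm_of_nonneg (mul_nonneg h1 h2)] using this
  set I := ∫ x, f x * g x ∂ν with hI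
  have hI0 : 0 ≤ I := integral_nonneg fun x =>
    mul_nonneg (Real.sqrt_nonneg _) (Real.sqrt_nonneg _)
  -- Cauchy–Schwarz : I ≤ 1
  have hfL2 : MemLp f 2 ν := (memLp_two_iff_integrable_sq hfm.aestronglyMeasurable).mpr hfsqint
  have hgL2 : MemLp g 2 ν := (memLp_two_iff_integrable_sq hgm.aestronglyMeasurable).mpr hgsqint
  have hI1 : I ≤ 1 := by
    have h2 : ((2 : ℝ)).HolderConjugate 2 := ⟨by norm_num, by norm_num, by norm_num⟩
    have hcs := integral_mul_le_Lp_mul_Lq_of_nonneg h2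
      (Filter.Eventually.of_forall fun x => Real.sqrt_nonneg (π x))
      (Filter.Eventually.of_forall fun x => Real.sqrt_nonneg (π' x))
      (by simpa using hfL2) (by simpa using hgL2)
    simp only [Real.rpow_two] at hcs
    have hfint2 : ∫ x, Real.sqrt (π x) ^ 2 ∂ν = 1 := by
      rw [← hπ1]
      exact integral_congr_ae (Filter.Eventually.of_forall fun x => hfsq x)
    have hgint2 : ∫ x, Real.sqrt (π' x) ^ 2 ∂ν = 1 := by
      rw [← hπ'1]
      exact integral_congr_ae (Filter.Eventually.of_forall fun x => hgsq x)
    rw [hfint2, hgint2] at hcs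
    simpa using hcs
  -- compute the two integrals
  have hsum : Integrable (fun x => f x ^ 2 + g x ^ 2) ν := hfsqint.add hgsqint
  have hmul2 : Integrable (fun x => 2 * (f x * g x)) ν := hfgint.const_mul 2
  have hint1 : ∫ x, (f x - g x) ^ 2 ∂ν = 2 - 2 * I := by
    have heq : ∀ x, (f x - g x) ^ 2 = f x ^ 2 + g x ^ 2 - 2 * (f x * g x) := fun x => by ring
    calc ∫ x, (f x - g x) ^ 2 ∂ν
        = ∫ x, (f x ^ 2 + g x ^ 2 - 2 * (f x * g x)) ∂ν :=
          integral_congr_ae (Filter.Eventually.of_forall heq)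
      _ = (∫ x, (f x ^ 2 + g x ^ 2) ∂ν) - ∫ x, 2 * (f x * g x) ∂ν := integral_sub hsum hmul2
      _ = ((∫ x, f x ^ 2 ∂ν) + ∫ x, g x ^ 2 ∂ν) - 2 * ∫ x, f x * g x ∂ν := by
          rw [integral_add hfsqint hgsqint, integral_const_mul]
      _ = 2 - 2 * I := by
          simp only [hfsq, hgsq]; rw [hπ1, hπ'1]; ring
  have hscale : ∀ x, Real.sqrt (k * π x) - Real.sqrt (k' * π' x) = a * f x - b * g x := by
    intro x
    rw [Real.sqrt_mul hk.le, Real.sqrt_mul hk'.le]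
  have hsum2 : Integrable (fun x => a ^ 2 * f x ^ 2 + b ^ 2 * g x ^ 2) ν :=
    (hfsqint.const_mul _).add (hgsqint.const_mul _)
  have hmul3 : Integrable (fun x => 2 * (a * b) * (f x * g x)) ν := hfgint.const_mul _
  have hint2 : ∫ x, (Real.sqrt (k * π x) - Real.sqrt (k' * π' x)) ^ 2 ∂ν
      = a ^ 2 + b ^ 2 - 2 * (a * b) * I := by
    have heq : ∀ x, (Real.sqrt (k * π x) - Real.sqrt (k' * π' x)) ^ 2
        = a ^ 2 * f x ^ 2 + b ^ 2 * g x ^ 2 - 2 * (a * b) * (f x * g x) := fun x => by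
      rw [hscale x]; ring
    calc ∫ x, (Real.sqrt (k * π x) - Real.sqrt (k' * π' x)) ^ 2 ∂ν
        = ∫ x, (a ^ 2 * f x ^ 2 + b ^ 2 * g x ^ 2 - 2 * (a * b) * (f x * g x)) ∂ν :=
          integral_congr_ae (Filter.Eventually.of_forall heq)
      _ = (∫ x, (a ^ 2 * f x ^ 2 + b ^ 2 * g x ^ 2) ∂ν) - ∫ x, 2 * (a * b) * (f x * g x) ∂ν :=
          integral_sub hsum2 hmul3
      _ = (a ^ 2 * (∫ x, f x ^ 2 ∂ν) + b ^ 2 * ∫ x, g x ^ 2 ∂ν)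
            - 2 * (a * b) * ∫ x, f x * g x ∂ν := by
          rw [integral_add (hfsqint.const_mul _) (hgsqint.const_mul _),
            integral_const_mul, integral_const_mul, integral_const_mul]
      _ = a ^ 2 + b ^ 2 - 2 * (a * b) * I := by
          simp only [hfsq, hgsq]; rw [hπ1, hπ'1]; ring
  rw [hint1, hint2]
  -- reduce to an algebraic inequality
  have h2a : (2:ℝ)/a = Real.sqrt (4/k) := by
    rw [Real.sqrt_div' 4 hk.le, ha, show Real.sqrt 4 = 2 by
      rw [show (4:ℝ) = 2^2 by norm_num, Real.sqrt_sq (by norm_num : (0:ℝ) ≤ 2)]]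
  have hka : k = a^2 := by rw [ha, Real.sq_sqrt hk.le]
  rw [h2a, ← Real.sqrt_mul (by positivity)]
  apply Real.sqrt_le_sqrt
  rw [hka, show (4:ℝ)/a^2 * (1/2*(a^2+b^2-2*(a*b)*I)) = (2*(a^2+b^2-2*(a*b)*I))/a^2 by ring,
    le_div_iff₀ (pow_pos ha0 2)]
  nlinarith [mul_nonneg (sq_nonneg (a-b)) (sub_nonneg.mpr hI1),
    mul_nonneg (mul_pos ha0 hb0).le hI0, sq_nonneg (a-b)]
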